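/- (Corollary, hinge loss.) Let c ∈ (0, 1/2), K ≥ 2, let X be a measurable space, P a probability measure on X × {1,…,K}, and g : X → ℝ^K a measurable score function with finite cost-sensitive hinge surrogate risk. With the hinge loss φ_hin(z) = max(0, 1 − z): R01c(f(·; g)) − R01c* ≤ R_CS^{φ_hin}(g) − R_CS^{φ_hin,*}. -/

import Mathlib

open Classical MeasureTheory

/-- The discrete σ-algebra on decisions (`none` = rejection ®). -/
instance {K : ℕ} : MeasurableSpace (Option (Fin K)) := ⊤

/-- The margin zero-one loss: `ℓ01(z) = 1` if `z ≤ 0` and `0` otherwise. -/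
noncomputable def mloss01 (z : ℝ) : ℝ := if z ≤ 0 then 1 else 0

/-- The cost-sensitive surrogate loss `L_CS^φ(g, y) = c·φ(g_y) + (1−c)·∑_{y'≠y} φ(−g_{y'})`. -/
noncomputable def LCS {K : ℕ} (φ : ℝ → ℝ) (c : ℝ) (g : Fin K → ℝ) (y : Fin K) : ℝ :=
  c * φ (g y) + (1 - c) * ∑ y' ∈ Finset.univ.erase y, φ (-(g y'))

/-- The decision rule induced by a score vector `g`: reject (`none`) if
`max_y g_y ≤ 0` or if two distinct coordinates of `g` are strictly positive,
otherwise output the unique class `y` with `g_y > 0`. -/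
noncomputable def decRule {K : ℕ} (g : Fin K → ℝ) : Option (Fin K) :=
  if h : ∃! y, 0 < g y then some h.choose else none

/-- The zero-one-c loss of a decision (`none` = rejection ®) against a label `y`:
`c` for rejection, `0` for the correct class, `1` for a wrong class. -/
noncomputable def loss01c {K : ℕ} (c : ℝ) (y : Fin K) : Option (Fin K) → ℝ
  | none => c
  | some z => if z = y then 0 else 1

/-- The zero-one-c risk of a decision rule `h` under `P`:
`R01c(h) = E_{(x,y)∼P}[ℓ01c(h(x), y)]`. -/
noncomputable def R01c {X : Type*} [MeasurableSpace X] {K : ℕ} (c : ℝ)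
    (P : Measure (X × Fin K)) (h : X → Option (Fin K)) : ℝ :=
  ∫ p, loss01c c p.2 (h p.1) ∂P

/-- The Bayes zero-one-c risk: the infimum of `R01c` over measurable decision rules. -/
noncomputable def R01cStar (X : Type*) [MeasurableSpace X] (K : ℕ) (c : ℝ)
    (P : Measure (X × Fin K)) : ℝ :=
  sInf {r : ℝ | ∃ h : X → Option (Fin K), Measurable h ∧ r = R01c c P h}

/-- The cost-sensitive surrogate risk `R_CS^φ(g) = E_{(x,y)∼P}[L_CS^φ(g(x), y)]`. -/
noncomputable def RCS {X : Type*} [MeasurableSpace X] {K : ℕ} (φ : ℝ → ℝ) (c : ℝ)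
    (P : Measure (X × Fin K)) (g : X → Fin K → ℝ) : ℝ :=
  ∫ p, LCS φ c (g p.1) p.2 ∂P

/-- The infimum of the cost-sensitive surrogate risk over measurable score functions. -/
noncomputable def RCSStar (X : Type*) [MeasurableSpace X] (K : ℕ) (φ : ℝ → ℝ) (c : ℝ)
    (P : Measure (X × Fin K)) : ℝ :=
  sInf {r : ℝ | ∃ g : X → Fin K → ℝ, Measurable g ∧ r = RCS φ c P g}

/-- The one-versus-rest cost-sensitive binary `φ`-risk of class `i`:
`R^{φ,i}_{1−c}(u) = E[c·1[y = i]·φ(u(x)) + (1−c)·1[y ≠ i]·φ(−u(x))]`. -/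
noncomputable def Rbin {X : Type*} [MeasurableSpace X] {K : ℕ} (φ : ℝ → ℝ) (c : ℝ)
    (P : Measure (X × Fin K)) (i : Fin K) (u : X → ℝ) : ℝ :=
  ∫ p, (if p.2 = i then c * φ (u p.1) else (1 - c) * φ (-(u p.1))) ∂P

/-- The infimum of the one-versus-rest cost-sensitive binary `φ`-risk of class `i`
over measurable functions. -/
noncomputable def RbinStar (X : Type*) [MeasurableSpace X] (K : ℕ) (φ : ℝ → ℝ) (c : ℝ)
    (P : Measure (X × Fin K)) (i : Fin K) : ℝ :=
  sInf {r : ℝ | ∃ u : X → ℝ, Measurable u ∧ r = Rbin φ c P i u}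

/-- The hinge loss `φ_hin(z) = max(0, 1 − z)`. -/
noncomputable def hinge (z : ℝ) : ℝ := max 0 (1 - z)


open ProbabilityTheory

/-- auxiliary binary conditional risk -/
noncomputable def Bfun (c η u : ℝ) : ℝ :=
  c * η * hinge u + (1 - c) * (1 - η) * hinge (-u)

noncomputable def ustar (c η : ℝ) : ℝ := if 1 - c ≤ η then 1 else -1

lemma hinge_nonneg (z : ℝ) : 0 ≤ hinge z := le_max_left _ _
lemma hinge_ge (z : ℝ) : 1 - z ≤ hinge z := le_max_right _ _
lemma hinge_of_le {z : ℝ} (h : z ≤ 1) : hinge z = 1 - z := max_eq_right (by linarith)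
lemma hinge_of_ge {z : ℝ} (h : 1 ≤ z) : hinge z = 0 := max_eq_left (by linarith)

lemma hinge_one : hinge 1 = 0 := hinge_of_ge le_rfl
lemma hinge_neg_one : hinge (-1) = 2 := by rw [hinge_of_le (by norm_num)]; norm_num

lemma Bfun_ustar (c η : ℝ) :
    Bfun c η (ustar c η) = if 1 - c ≤ η then 2 * (1 - c) * (1 - η) else 2 * c * η := by
  unfold ustar Bfun
  split_ifs with h
  · rw [hinge_one, show -(1:ℝ) = -1 by ring, hinge_neg_one]; ring
  · rw [hinge_neg_one, show -(-1:ℝ) = 1 by ring, hinge_one]; ring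

lemma Bfun_ustar_le {c η : ℝ} (hc0 : 0 < c) (hc1 : c < 1) (hη0 : 0 ≤ η) (hη1 : η ≤ 1)
    (u : ℝ) : Bfun c η (ustar c η) ≤ Bfun c η u := by
  have hA0 : 0 ≤ hinge u := hinge_nonneg u
  have hB0 : 0 ≤ hinge (-u) := hinge_nonneg (-u)
  have hA : 1 - u ≤ hinge u := hinge_ge u
  have hB : 1 + u ≤ hinge (-u) := by have := hinge_ge (-u); linarith
  rw [Bfun_ustar]
  unfold Bfun
  split_ifs with h
  · nlinarith [mul_nonneg (mul_nonneg (by linarith : (0:ℝ) ≤ 1 - c) (by linarith : (0:ℝ) ≤ 1 - η)) (by linarith : (0:ℝ) ≤ hinge u + hinge (-u) - 2),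
      mul_nonneg (by nlinarith : (0:ℝ) ≤ c * η - (1 - c) * (1 - η)) hA0]
  · push_neg at h
    nlinarith [mul_nonneg (mul_nonneg hc0.le hη0) (by linarith : (0:ℝ) ≤ hinge u + hinge (-u) - 2),
      mul_nonneg (by nlinarith : (0:ℝ) ≤ (1 - c) * (1 - η) - c * η) hB0]

lemma Bfun_regret_of_nonpos {c η u : ℝ} (hc0 : 0 < c) (hc1 : c < 1) (hη0 : 0 ≤ η)
    (hη1 : η ≤ 1) (hu : u ≤ 0) :
    η - (1 - c) ≤ Bfun c η u - Bfun c η (ustar c η) := by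
  by_cases h : 1 - c ≤ η
  · rw [Bfun_ustar, if_pos h]
    have hA : hinge u = 1 - u := hinge_of_le (by linarith)
    have hB0 : 0 ≤ hinge (-u) := hinge_nonneg (-u)
    have hB : 1 + u ≤ hinge (-u) := by have := hinge_ge (-u); linarith
    have hs : 0 ≤ η - (1 - c) := by linarith
    unfold Bfun
    rcases le_total (-1) u with h1 | h1
    · have hBe : hinge (-u) = 1 + u := by rw [hinge_of_le (by linarith)]; ring
      rw [hA, hBe]; nlinarith [mul_nonneg hs (by linarith : (0:ℝ) ≤ -u)]
    · have hBe : hinge (-u) = 0 := hinge_of_ge (by linarith)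
      rw [hA, hBe]; nlinarith [mul_nonneg (mul_nonneg hc0.le hη0) (by linarith : (0:ℝ) ≤ -1 - u)]
  · push_neg at h
    have := Bfun_ustar_le hc0 hc1 hη0 hη1 u
    linarith

lemma Bfun_regret_of_nonneg {c η u : ℝ} (hc0 : 0 < c) (hc1 : c < 1) (hη0 : 0 ≤ η)
    (hη1 : η ≤ 1) (hu : 0 ≤ u) :
    (1 - c) - η ≤ Bfun c η u - Bfun c η (ustar c η) := by
  by_cases h : 1 - c ≤ η
  · have := Bfun_ustar_le hc0 hc1 hη0 hη1 u
    linarith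
  · push_neg at h
    rw [Bfun_ustar, if_neg (not_le.2 h)]
    have hB : hinge (-u) = 1 + u := by rw [hinge_of_le (by linarith)]; ring
    have hA0 : 0 ≤ hinge u := hinge_nonneg u
    have hA : 1 - u ≤ hinge u := hinge_ge u
    have ht : 0 ≤ (1 - c) - η := by linarith
    unfold Bfun
    rcases le_total u 1 with h1 | h1
    · have hAe : hinge u = 1 - u := hinge_of_le h1
      rw [hAe, hB]; nlinarith [mul_nonneg ht hu]
    · have hAe : hinge u = 0 := hinge_of_ge h1
      rw [hAe, hB]
      nlinarith [mul_nonneg (mul_nonneg (by linarith : (0:ℝ) ≤ 1 - c) (by linarith : (0:ℝ) ≤ 1 - η)) (by linarith : (0:ℝ) ≤ u - 1)]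


/-- the set of Bayes-optimal classes -/
noncomputable def bayesSet {K : ℕ} (c : ℝ) (η : Fin K → ℝ) : Finset (Fin K) :=
  Finset.univ.filter (fun z => 1 - c ≤ η z ∧ ∀ j, η j ≤ η z)

/-- a Bayes-optimal decision rule for the conditional distribution `η` -/
noncomputable def hstar {K : ℕ} (c : ℝ) (η : Fin K → ℝ) : Option (Fin K) :=
  if h : (bayesSet c η).Nonempty then some ((bayesSet c η).min' h) else none

lemma mem_bayesSet_iff {K : ℕ} {c : ℝ} {η : Fin K → ℝ} {z : Fin K} :
    z ∈ bayesSet c η ↔ 1 - c ≤ η z ∧ ∀ j, η j ≤ η z := by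
  simp [bayesSet]

lemma decRule_eq_some_iff {K : ℕ} {g : Fin K → ℝ} {z : Fin K} :
    decRule g = some z ↔ (0 < g z ∧ ∀ j, j ≠ z → g j ≤ 0) := by
  unfold decRule
  split_ifs with h
  · simp only [Option.some.injEq]
    constructor
    · rintro rfl
      exact ⟨h.choose_spec.1, fun j hj => not_lt.1 fun hpos => hj (h.choose_spec.2 j hpos)⟩
    · rintro ⟨hz, _⟩
      exact (h.choose_spec.2 z hz).symm
  · simp only [(by simp : (none : Option (Fin K)) ≠ some z), false_iff]
    rintro ⟨hz, hz2⟩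
    exact h ⟨z, hz, fun j hj => by_contra fun hne => (hz2 j hne).not_gt hj⟩

lemma decRule_eq_none_iff {K : ℕ} {g : Fin K → ℝ} :
    decRule g = none ↔ ¬ ∃! y, 0 < g y := by
  unfold decRule
  split_ifs with h <;> simp [h]

lemma hstar_eq_some_iff {K : ℕ} {c : ℝ} {η : Fin K → ℝ} {z : Fin K} :
    hstar c η = some z ↔ z ∈ bayesSet c η ∧ ∀ j ∈ bayesSet c η, z ≤ j := by
  unfold hstar
  split_ifs with h
  · simp only [Option.some.injEq]
    constructor
    · rintro rfl
      exact ⟨Finset.min'_mem _ h, fun j hj => Finset.min'_le _ j hj⟩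
    · rintro ⟨hz, hmin⟩
      exact le_antisymm (Finset.min'_le _ z hz) (Finset.le_min' _ h z hmin)
  · simp only [(by simp : (none : Option (Fin K)) ≠ some z), false_iff]
    rintro ⟨hz, _⟩
    exact h ⟨z, hz⟩

lemma loss_sum_none {K : ℕ} (c : ℝ) (η : Fin K → ℝ) :
    ∑ i, η i * loss01c c i none = c * ∑ i, η i := by
  simp only [loss01c, Finset.mul_sum]
  exact Finset.sum_congr rfl fun i _ => by ring

lemma loss_sum_some {K : ℕ} (c : ℝ) (η : Fin K → ℝ) (z : Fin K) :
    ∑ i, η i * loss01c c i (some z) = (∑ i, η i) - η z := by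
  have : ∀ i : Fin K, η i * loss01c c i (some z) = η i - (if z = i then η i else 0) := by
    intro i
    simp only [loss01c]
    split_ifs with h <;> ring
  rw [Finset.sum_congr rfl fun i _ => this i, Finset.sum_sub_distrib,
    Finset.sum_ite_eq Finset.univ z η, if_pos (Finset.mem_univ z)]


lemma hstar_none_lt {K : ℕ} (hK : 0 < K) {c : ℝ} {η : Fin K → ℝ}
    (hH : hstar c η = none) : ∀ j, η j < 1 - c := by
  have hbempty : ¬ (bayesSet c η).Nonempty := by
    intro hne
    rw [hstar, dif_pos hne] at hH
    exact Option.some_ne_none _ hH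
  obtain ⟨z0, -, hz0⟩ := Finset.exists_max_image Finset.univ η ⟨⟨0, hK⟩, Finset.mem_univ _⟩
  have hz0' : z0 ∉ bayesSet c η := fun hmem => hbempty ⟨z0, hmem⟩
  rw [mem_bayesSet_iff] at hz0'
  push_neg at hz0'
  have hz0lt : η z0 < 1 - c := by
    by_contra hge
    push_neg at hge
    obtain ⟨j, hj⟩ := hz0' hge
    exact absurd (hz0 j (Finset.mem_univ j)) (not_le.2 hj)
  intro j
  exact lt_of_le_of_lt (hz0 j (Finset.mem_univ j)) hz0lt

lemma hstar_opt {K : ℕ} (hK : 0 < K) {c : ℝ} (hc0 : 0 < c) (hc1 : c < 1)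
    (η : Fin K → ℝ) (hsum : ∑ i, η i = 1) (d : Option (Fin K)) :
    ∑ i, η i * loss01c c i (hstar c η) ≤ ∑ i, η i * loss01c c i d := by
  rcases hH : hstar c η with _ | w
  · rw [loss_sum_none, hsum, mul_one]
    cases d with
    | none => rw [loss_sum_none, hsum, mul_one]
    | some z =>
      rw [loss_sum_some, hsum]
      have := hstar_none_lt hK hH z
      linarith
  · rw [hstar_eq_some_iff] at hH
    obtain ⟨hwmem, -⟩ := hH
    rw [mem_bayesSet_iff] at hwmem
    obtain ⟨hw1, hwmax⟩ := hwmem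
    rw [loss_sum_some, hsum]
    cases d with
    | none => rw [loss_sum_none, hsum, mul_one]; linarith
    | some z =>
      rw [loss_sum_some, hsum]
      have := hwmax z
      linarith

lemma lcs_eq_bfun {K : ℕ} (c : ℝ) (η v : Fin K → ℝ) (hsum : ∑ i, η i = 1) :
    ∑ i, η i * LCS hinge c v i = ∑ i, Bfun c (η i) (v i) := by
  have h1 : ∀ i : Fin K, η i * LCS hinge c v i
      = c * (η i * hinge (v i)) + (1 - c) * ((∑ j, hinge (-(v j))) * η i)
        - (1 - c) * (η i * hinge (-(v i))) := by
    intro i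
    rw [LCS, Finset.sum_erase_eq_sub (Finset.mem_univ i)]
    ring
  have h2 : ∀ i : Fin K, Bfun c (η i) (v i)
      = c * (η i * hinge (v i)) + (1 - c) * hinge (-(v i))
        - (1 - c) * (η i * hinge (-(v i))) := by
    intro i; unfold Bfun; ring
  rw [Finset.sum_congr rfl fun i _ => h1 i, Finset.sum_congr rfl fun i _ => h2 i,
    Finset.sum_sub_distrib, Finset.sum_sub_distrib, Finset.sum_add_distrib,
    Finset.sum_add_distrib, ← Finset.mul_sum, ← Finset.mul_sum, ← Finset.mul_sum,
    ← Finset.mul_sum, ← Finset.mul_sum, hsum, mul_one]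

/-- The master pointwise (conditional) regret inequality. -/
lemma master {K : ℕ} (hK : 0 < K) {c : ℝ} (hc0 : 0 < c) (hc : c < 1/2)
    (η gv : Fin K → ℝ) (hη0 : ∀ i, 0 ≤ η i) (hsum : ∑ i, η i = 1) :
    (∑ i, η i * loss01c c i (decRule gv)) + (∑ i, Bfun c (η i) (ustar c (η i)))
      ≤ (∑ i, η i * loss01c c i (hstar c η)) + (∑ i, Bfun c (η i) (gv i)) := by
  have hc1 : c < 1 := by linarith
  have hη1 : ∀ i, η i ≤ 1 := by
    intro i
    have := Finset.single_le_sum (f := η) (fun j _ => hη0 j) (Finset.mem_univ i)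
    linarith
  set r : Fin K → ℝ := fun i => Bfun c (η i) (gv i) - Bfun c (η i) (ustar c (η i)) with hr_def
  have hr0 : ∀ i, 0 ≤ r i := fun i => by
    have := Bfun_ustar_le (η := η i) hc0 hc1 (hη0 i) (hη1 i) (gv i)
    simp only [hr_def]; linarith
  have hrneg : ∀ i, gv i ≤ 0 → η i - (1 - c) ≤ r i := fun i hi =>
    Bfun_regret_of_nonpos hc0 hc1 (hη0 i) (hη1 i) hi
  have hrpos : ∀ i, 0 ≤ gv i → (1 - c) - η i ≤ r i := fun i hi =>
    Bfun_regret_of_nonneg hc0 hc1 (hη0 i) (hη1 i) hi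
  have sum_ge_one : ∀ i, r i ≤ ∑ j, r j := fun i =>
    Finset.single_le_sum (fun j _ => hr0 j) (Finset.mem_univ i)
  have sum_ge_two : ∀ i j, i ≠ j → r i + r j ≤ ∑ k, r k := by
    intro i j hij
    have h := Finset.sum_le_sum_of_subset_of_nonneg (Finset.subset_univ ({i, j} : Finset (Fin K)))
      (fun k _ _ => hr0 k)
    rwa [Finset.sum_pair hij] at h
  have hpair : ∀ i j, i ≠ j → η i + η j ≤ 1 := by
    intro i j hij
    have h := Finset.sum_le_sum_of_subset_of_nonneg (Finset.subset_univ ({i, j} : Finset (Fin K)))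
      (fun k _ _ => hη0 k)
    rw [Finset.sum_pair hij, hsum] at h
    exact h
  have hrsum : ∑ i, Bfun c (η i) (gv i) - ∑ i, Bfun c (η i) (ustar c (η i)) = ∑ i, r i := by
    rw [hr_def, Finset.sum_sub_distrib]
  suffices h : (∑ i, η i * loss01c c i (decRule gv)) - (∑ i, η i * loss01c c i (hstar c η))
      ≤ ∑ i, r i by linarith
  -- analyze hstar
  rcases hH : hstar c η with _ | w
  · -- hstar = none : all η j < 1 - c
    have hsmall : ∀ j, η j < 1 - c := hstar_none_lt hK hH
    rw [loss_sum_none, hsum, mul_one]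
    rcases hD : decRule gv with _ | z
    · rw [loss_sum_none, hsum, mul_one]
      simp only [sub_self]
      exact Finset.sum_nonneg fun i _ => hr0 i
    · rw [loss_sum_some, hsum]
      rw [decRule_eq_some_iff] at hD
      have := hrpos z hD.1.le
      have := sum_ge_one z
      linarith
  · -- hstar = some w
    rw [hstar_eq_some_iff] at hH
    obtain ⟨hwmem, -⟩ := hH
    rw [mem_bayesSet_iff] at hwmem
    obtain ⟨hw1, hwmax⟩ := hwmem
    rw [loss_sum_some, hsum]
    rcases hD : decRule gv with _ | z
    · -- decRule = none
      rw [loss_sum_none, hsum, mul_one]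
      rw [decRule_eq_none_iff] at hD
      by_cases hp : ∃ j, 0 < gv j
      · obtain ⟨j, hj⟩ := hp
        by_cases hgw : gv w ≤ 0
        · have := hrneg w hgw
          have := sum_ge_one w
          linarith
        · push_neg at hgw
          -- j itself: if j = w, use non-uniqueness to find k ≠ w with gv k > 0
          have hex : ∃ k, 0 < gv k ∧ k ≠ w := by
            by_cases hjw : j = w
            · have hnall : ¬ ∀ y, 0 < gv y → y = w := fun hall => hD ⟨w, hgw, hall⟩
              push_neg at hnall
              obtain ⟨k, hk1, hk2⟩ := hnall
              exact ⟨k, hk1, hk2⟩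
            · exact ⟨j, hj, hjw⟩
          obtain ⟨k, hk, hkw⟩ := hex
          have h1 := hrpos k hk.le
          have h2 := hpair k w hkw
          have := sum_ge_one k
          linarith
      · push_neg at hp
        have := hrneg w (hp w)
        have := sum_ge_one w
        linarith
    · -- decRule = some z
      rw [loss_sum_some, hsum]
      rw [decRule_eq_some_iff] at hD
      obtain ⟨hz, hzrest⟩ := hD
      by_cases hzw : z = w
      · subst hzw
        simp only [sub_self, sub_le_iff_le_add'] at *
        have : (0:ℝ) ≤ ∑ i, r i := Finset.sum_nonneg fun i _ => hr0 i
        linarith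
      · have h1 := hrpos z hz.le
        have h2 := hrneg w (hzrest w (fun h => hzw h.symm))
        have := sum_ge_two z w hzw
        linarith


lemma loss01c_nonneg {K : ℕ} {c : ℝ} (hc : 0 ≤ c) (y : Fin K) (d : Option (Fin K)) :
    0 ≤ loss01c c y d := by
  cases d with
  | none => exact hc
  | some z => simp only [loss01c]; split_ifs <;> norm_num

lemma loss01c_abs_le_one {K : ℕ} {c : ℝ} (hc0 : 0 ≤ c) (hc1 : c ≤ 1) (y : Fin K)
    (d : Option (Fin K)) : |loss01c c y d| ≤ 1 := by
  cases d with
  | none => rw [loss01c, abs_of_nonneg hc0]; exact hc1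
  | some z => simp only [loss01c]; split_ifs <;> norm_num

lemma LCS_hinge_nonneg {K : ℕ} {c : ℝ} (hc0 : 0 ≤ c) (hc1 : c ≤ 1) (v : Fin K → ℝ)
    (i : Fin K) : 0 ≤ LCS hinge c v i :=
  add_nonneg (mul_nonneg hc0 (hinge_nonneg _))
    (mul_nonneg (by linarith) (Finset.sum_nonneg fun j _ => hinge_nonneg _))

lemma LCS_hinge_abs_le {K : ℕ} {c : ℝ} (hc0 : 0 ≤ c) (hc1 : c ≤ 1) (v : Fin K → ℝ)
    (hv : ∀ j, hinge (v j) ≤ 2 ∧ hinge (-(v j)) ≤ 2) (i : Fin K) :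
    |LCS hinge c v i| ≤ 2 + 2 * K := by
  rw [abs_of_nonneg (LCS_hinge_nonneg hc0 hc1 v i)]
  have hsum0 : 0 ≤ ∑ j ∈ Finset.univ.erase i, hinge (-(v j)) :=
    Finset.sum_nonneg fun j _ => hinge_nonneg _
  have hsum : ∑ j ∈ Finset.univ.erase i, hinge (-(v j)) ≤ 2 * K := by
    calc ∑ j ∈ Finset.univ.erase i, hinge (-(v j)) ≤ ∑ _j ∈ Finset.univ.erase i, 2 :=
          Finset.sum_le_sum fun j _ => (hv j).2
      _ = ((Finset.univ.erase i).card : ℝ) * 2 := by rw [Finset.sum_const, nsmul_eq_mul]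
      _ ≤ (K : ℝ) * 2 := by
          have h1 : (Finset.univ.erase i).card ≤ K := by
            calc (Finset.univ.erase i).card ≤ (Finset.univ : Finset (Fin K)).card :=
                  Finset.card_le_card (Finset.erase_subset i Finset.univ)
              _ = K := by simp
          have : ((Finset.univ.erase i).card : ℝ) ≤ (K : ℝ) := by exact_mod_cast h1
          linarith
      _ = 2 * K := by ring
  rw [LCS]
  nlinarith [(hv i).1, hinge_nonneg (v i)]



/-- (Corollary, hinge loss.) For a measurable score function `g` with finite
cost-sensitive hinge surrogate risk, the zero-one-c regret of the induced decision
rule is bounded by the cost-sensitive hinge surrogate regret. -/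
theorem stmt15 (c : ℝ) (hc0 : 0 < c) (hc : c < 1/2) (K : ℕ) (hK : 2 ≤ K)
    (X : Type*) [MeasurableSpace X] (P : Measure (X × Fin K)) [IsProbabilityMeasure P]
    (g : X → Fin K → ℝ) (hg : Measurable g)
    (hint : Integrable (fun p : X × Fin K => LCS hinge c (g p.1) p.2) P) :
    R01c c P (fun x => decRule (g x)) - R01cStar X K c P ≤
      RCS hinge c P g - RCSStar X K hinge c P := by
  haveI : Nonempty (Fin K) := ⟨⟨0, by omega⟩⟩
  have hc1 : c < 1 := by linarith
  set μ : Measure X := P.fst with hμ_def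
  set κ := P.condKernel with hκ_def
  set η : Fin K → X → ℝ := fun i x => (κ x {i}).toReal with hη_def
  -- basic facts about η
  have hηm : ∀ i, Measurable (η i) := fun i =>
    (Kernel.measurable_coe κ (measurableSet_singleton i)).ennreal_toReal
  have hη0 : ∀ i x, 0 ≤ η i x := fun i x => ENNReal.toReal_nonneg
  have hηsum : ∀ x, ∑ i, η i x = 1 := by
    intro x
    have h1 : ∑ i : Fin K, κ x {i} = κ x Set.univ := by
      have h := sum_measure_preimage_singleton (μ := κ x) (Finset.univ : Finset (Fin K))
        (f := (id : Fin K → Fin K)) (fun y _ => by simpa using measurableSet_singleton y)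
      simpa using h
    calc ∑ i, η i x = ((∑ i : Fin K, κ x {i})).toReal :=
          (ENNReal.toReal_sum (fun i _ => measure_ne_top _ _)).symm
      _ = 1 := by rw [h1, measure_univ, ENNReal.toReal_one]
  -- the Bayes decision rule and Bayes binary score function
  set hr : X → Option (Fin K) := fun x => hstar c (fun i => η i x) with hhr_def
  set ur : X → Fin K → ℝ := fun x i => ustar c (η i x) with hur_def
  -- measurability of hinge / LCS / ustar
  have hingeMeas : Measurable hinge := by
    unfold hinge
    exact (continuous_const.max (continuous_const.sub continuous_id)).measurable
  have hLCSmeas : ∀ i : Fin K, Measurable (fun v : Fin K → ℝ => LCS hinge c v i) := by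
    intro i
    unfold LCS
    exact ((hingeMeas.comp (measurable_pi_apply i)).const_mul c).add
      ((Finset.measurable_sum _ fun j _ =>
        hingeMeas.comp (measurable_pi_apply j).neg).const_mul (1 - c))
  have hustarm : Measurable (ustar c) := by
    unfold ustar
    exact Measurable.ite (measurableSet_le measurable_const measurable_id)
      measurable_const measurable_const
  have hur : Measurable ur :=
    measurable_pi_lambda _ fun i => hustarm.comp (hηm i)
  -- measurability of the induced decision rule
  have hdecfib : ∀ z : Fin K, MeasurableSet {x | decRule (g x) = some z} := by
    intro z
    have heq : {x | decRule (g x) = some z}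
        = {x | 0 < g x z} ∩ ⋂ j, {x | j ≠ z → g x j ≤ 0} := by
      ext x
      simp [decRule_eq_some_iff, Set.mem_iInter]
    rw [heq]
    refine (measurableSet_lt measurable_const ((measurable_pi_apply z).comp hg)).inter
      (MeasurableSet.iInter fun j => ?_)
    by_cases hj : j = z
    · have : {x | j ≠ z → g x j ≤ 0} = Set.univ := by ext x; simp [hj]
      rw [this]; exact MeasurableSet.univ
    · have : {x | j ≠ z → g x j ≤ 0} = {x | g x j ≤ 0} := by ext x; simp [hj]
      rw [this]; exact measurableSet_le ((measurable_pi_apply j).comp hg) measurable_const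
  have hdec : Measurable (fun x => decRule (g x)) := by
    apply measurable_to_countable'
    intro y
    cases y with
    | none =>
      have heq : (fun x => decRule (g x)) ⁻¹' {none}
          = (⋃ z, {x | decRule (g x) = some z})ᶜ := by
        ext x
        cases h : decRule (g x) <;> simp [h]
      rw [heq]
      exact (MeasurableSet.iUnion hdecfib).compl
    | some z =>
      have heq : (fun x => decRule (g x)) ⁻¹' {some z} = {x | decRule (g x) = some z} := by
        ext x; simp
      rw [heq]; exact hdecfib z
  -- measurability of hr
  have hAset : ∀ z : Fin K, MeasurableSet {x | 1 - c ≤ η z x ∧ ∀ j, η j x ≤ η z x} := by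
    intro z
    have heq : {x | 1 - c ≤ η z x ∧ ∀ j, η j x ≤ η z x}
        = {x | 1 - c ≤ η z x} ∩ ⋂ j, {x | η j x ≤ η z x} := by
      ext x; simp [Set.mem_iInter]
    rw [heq]
    exact (measurableSet_le measurable_const (hηm z)).inter
      (MeasurableSet.iInter fun j => measurableSet_le (hηm j) (hηm z))
  have hrfib : ∀ z : Fin K, MeasurableSet {x | hr x = some z} := by
    intro z
    have heq : {x | hr x = some z}
        = {x | 1 - c ≤ η z x ∧ ∀ j, η j x ≤ η z x}
          ∩ ⋂ j : Fin K, {x | (1 - c ≤ η j x ∧ ∀ j', η j' x ≤ η j x) → z ≤ j} := by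
      ext x
      simp only [Set.mem_setOf_eq, Set.mem_inter_iff, Set.mem_iInter, hhr_def,
        hstar_eq_some_iff, mem_bayesSet_iff]
    rw [heq]
    refine (hAset z).inter (MeasurableSet.iInter fun j => ?_)
    by_cases hzj : z ≤ j
    · have : {x | (1 - c ≤ η j x ∧ ∀ j', η j' x ≤ η j x) → z ≤ j} = Set.univ := by
        ext x; simp [hzj]
      rw [this]; exact MeasurableSet.univ
    · have : {x | (1 - c ≤ η j x ∧ ∀ j', η j' x ≤ η j x) → z ≤ j}
          = {x | 1 - c ≤ η j x ∧ ∀ j', η j' x ≤ η j x}ᶜ := by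
        ext x; simp [hzj]
      rw [this]; exact (hAset j).compl
  have hhr : Measurable hr := by
    apply measurable_to_countable'
    intro y
    cases y with
    | none =>
      have heq : hr ⁻¹' {none} = (⋃ z, {x | hr x = some z})ᶜ := by
        ext x
        cases h : hr x <;> simp [h]
      rw [heq]
      exact (MeasurableSet.iUnion hrfib).compl
    | some z =>
      have heq : hr ⁻¹' {some z} = {x | hr x = some z} := by ext x; simp
      rw [heq]; exact hrfib z
  -- product-level measurability
  have hlossm : ∀ (h' : X → Option (Fin K)), Measurable h' →
      Measurable (fun p : X × Fin K => loss01c c p.2 (h' p.1)) := by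
    intro h' hm
    have houter : Measurable (fun q : Option (Fin K) × Fin K => loss01c c q.2 q.1) :=
      measurable_from_prod_countable_left fun y => measurable_from_top
    exact houter.comp ((hm.comp measurable_fst).prodMk measurable_snd)
  have hLCSp : ∀ (u' : X → Fin K → ℝ), Measurable u' →
      Measurable (fun p : X × Fin K => LCS hinge c (u' p.1) p.2) := by
    intro u' hm
    have houter : Measurable (fun q : (Fin K → ℝ) × Fin K => LCS hinge c q.1 q.2) :=
      measurable_from_prod_countable_left fun i => hLCSmeas i
    exact houter.comp ((hm.comp measurable_fst).prodMk measurable_snd)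
  -- integrability from boundedness
  have hbdd_int : ∀ (f : X × Fin K → ℝ) (C : ℝ), Measurable f → (∀ p, |f p| ≤ C) →
      Integrable f P := by
    intro f C hm hb
    exact (integrable_const C).mono' hm.aestronglyMeasurable
      (ae_of_all _ fun p => by simpa [Real.norm_eq_abs] using hb p)
  -- the disintegration identity
  have key : ∀ f : X × Fin K → ℝ, Measurable f → Integrable f P →
      Integrable (fun x => ∑ i, η i x * f (x, i)) μ ∧
      ∫ p, f p ∂P = ∫ x, ∑ i, η i x * f (x, i) ∂μ := by
    intro f hfm hf
    have hdis : μ ⊗ₘ κ = P := P.disintegrate κ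
    have hf' : Integrable f (μ ⊗ₘ κ) := by rw [hdis]; exact hf
    have hinner : ∀ x, ∫ y, f (x, y) ∂(κ x) = ∑ i, η i x * f (x, i) := by
      intro x
      rw [integral_fintype (Integrable.of_finite)]
      simp [hη_def, smul_eq_mul, Measure.real]
    constructor
    · have h2 := ((Measure.integrable_compProd_iff hf'.aestronglyMeasurable).mp hf').2
      apply h2.mono'
      · exact (Finset.measurable_sum Finset.univ fun i _ =>
          (hηm i).mul (hfm.comp (measurable_id.prodMk measurable_const))).aestronglyMeasurable
      · refine ae_of_all _ fun x => ?_
        rw [← hinner x]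
        exact norm_integral_le_integral_norm _
    · rw [← hdis, Measure.integral_compProd hf']
      exact integral_congr_ae (ae_of_all _ hinner)
  -- the four functions
  have hub : ∀ j x, hinge (ur x j) ≤ 2 ∧ hinge (-(ur x j)) ≤ 2 := by
    intro j x
    simp only [hur_def, ustar]
    split_ifs <;> constructor <;>
      simp [hinge_one, hinge_neg_one]
  have int1 : Integrable (fun p : X × Fin K => loss01c c p.2 (decRule (g p.1))) P :=
    hbdd_int _ 1 (hlossm _ hdec) fun p => loss01c_abs_le_one hc0.le hc1.le _ _
  have int2 : Integrable (fun p : X × Fin K => loss01c c p.2 (hr p.1)) P :=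
    hbdd_int _ 1 (hlossm _ hhr) fun p => loss01c_abs_le_one hc0.le hc1.le _ _
  have int4 : Integrable (fun p : X × Fin K => LCS hinge c (ur p.1) p.2) P :=
    hbdd_int _ (2 + 2 * K) (hLCSp ur hur) fun p =>
      LCS_hinge_abs_le hc0.le hc1.le _ (fun j => hub j p.1) p.2
  have K1 := key _ (hlossm _ hdec) int1
  have K2 := key _ (hLCSp ur hur) int4
  have K3 := key _ (hlossm _ hhr) int2
  have K4 := key _ (hLCSp g hg) hint
  -- pointwise master inequality
  have hpt : ∀ x, (∑ i, η i x * loss01c c i (decRule (g x)))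
      + (∑ i, η i x * LCS hinge c (ur x) i)
      ≤ (∑ i, η i x * loss01c c i (hr x)) + (∑ i, η i x * LCS hinge c (g x) i) := by
    intro x
    have hm := master (by omega : 0 < K) hc0 hc (fun i => η i x) (g x)
      (fun i => hη0 i x) (hηsum x)
    have e2 : ∑ i, η i x * LCS hinge c (ur x) i = ∑ i, Bfun c (η i x) (ustar c (η i x)) :=
      lcs_eq_bfun c (fun i => η i x) (ur x) (hηsum x)
    have e4 : ∑ i, η i x * LCS hinge c (g x) i = ∑ i, Bfun c (η i x) (g x i) :=
      lcs_eq_bfun c (fun i => η i x) (g x) (hηsum x)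
    rw [e2, e4]
    exact hm
  -- integrate
  have hmono : (∫ x, ∑ i, η i x * loss01c c i (decRule (g x)) ∂μ)
      + (∫ x, ∑ i, η i x * LCS hinge c (ur x) i ∂μ)
      ≤ (∫ x, ∑ i, η i x * loss01c c i (hr x) ∂μ)
      + (∫ x, ∑ i, η i x * LCS hinge c (g x) i ∂μ) := by
    rw [← integral_add K1.1 K2.1, ← integral_add K3.1 K4.1]
    exact integral_mono (K1.1.add K2.1) (K3.1.add K4.1) hpt
  -- risk identities
  have e1 : R01c c P (fun x => decRule (g x))
      = ∫ x, ∑ i, η i x * loss01c c i (decRule (g x)) ∂μ := K1.2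
  have e2 : RCS hinge c P ur = ∫ x, ∑ i, η i x * LCS hinge c (ur x) i ∂μ := K2.2
  have e3 : R01c c P hr = ∫ x, ∑ i, η i x * loss01c c i (hr x) ∂μ := K3.2
  have e4 : RCS hinge c P g = ∫ x, ∑ i, η i x * LCS hinge c (g x) i ∂μ := K4.2
  -- Bayes bounds
  have hlb1 : (∫ x, ∑ i, η i x * loss01c c i (hr x) ∂μ) ≤ R01cStar X K c P := by
    have hne : {r : ℝ | ∃ h : X → Option (Fin K), Measurable h ∧ r = R01c c P h}.Nonempty :=
      ⟨R01c c P hr, hr, hhr, rfl⟩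
    apply le_csInf hne
    rintro r ⟨h', hm', rfl⟩
    have inth' : Integrable (fun p : X × Fin K => loss01c c p.2 (h' p.1)) P :=
      hbdd_int _ 1 (hlossm _ hm') fun p => loss01c_abs_le_one hc0.le hc1.le _ _
    have Kh := key _ (hlossm _ hm') inth'
    have eh : R01c c P h' = ∫ x, ∑ i, η i x * loss01c c i (h' x) ∂μ := Kh.2
    rw [eh]
    refine integral_mono K3.1 Kh.1 fun x => ?_
    exact hstar_opt (by omega : 0 < K) hc0 hc1 (fun i => η i x) (hηsum x) (h' x)
  have hlb2 : RCSStar X K hinge c P ≤ RCS hinge c P ur := by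
    apply csInf_le
    · refine ⟨0, ?_⟩
      rintro r ⟨g', -, rfl⟩
      exact integral_nonneg fun p => LCS_hinge_nonneg hc0.le hc1.le _ _
    · exact ⟨ur, hur, rfl⟩
  linarith [hmono, hlb1, hlb2, e1, e2, e3, e4]
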